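/- arXiv:1905.08457 — 2 statements merged into one kernel-verified Lean document; each statement's English description precedes it below -/
import Mathlib

section
/- Let x, y ∈ ℝ^d and suppose that ‖x−y‖₂ ≤ r, ‖x‖₂ ≤ r, and ‖x+y‖₂ ≤ r, while ‖x−y‖₂ ≥ r−δ, ‖x‖₂ ≥ r−δ, ‖x+y‖₂ ≥ r−δ, where 0 ≤ δ ≤ r. Then ‖y‖₂ ≤ √(2δr). -/
theorem stmt_6 (d : ℕ) (x y : EuclideanSpace ℝ (Fin d)) (r δ : ℝ)
    (hr : 0 < r) (hδ0 : 0 ≤ δ) (hδr : δ ≤ r)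
    (h1 : ‖x - y‖ ≤ r) (h2 : ‖x‖ ≤ r) (h3 : ‖x + y‖ ≤ r)
    (h4 : r - δ ≤ ‖x - y‖) (h5 : r - δ ≤ ‖x‖) (h6 : r - δ ≤ ‖x + y‖) :
    ‖y‖ ≤ Real.sqrt (2 * δ * r) := by
  have hpar := norm_add_sq_real x y
  have hpar2 := norm_sub_sq_real x y
  have hy2 : ‖y‖ ^ 2 ≤ 2 * δ * r := by
    have hxy : (r - δ) ^ 2 ≤ ‖x‖ ^ 2 := by
      apply sq_le_sq' <;> nlinarith [norm_nonneg x]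
    have h3' : ‖x + y‖ ^ 2 ≤ r ^ 2 := by nlinarith [norm_nonneg (x + y)]
    have h1' : ‖x - y‖ ^ 2 ≤ r ^ 2 := by nlinarith [norm_nonneg (x - y)]
    nlinarith
  have := Real.sqrt_le_sqrt hy2
  calc ‖y‖ = Real.sqrt (‖y‖ ^ 2) := by rw [Real.sqrt_sq (norm_nonneg y)]
    _ ≤ Real.sqrt (2 * δ * r) := this
end

section
/- Let S ⊆ ℕ be the set of positive integers all of whose base-6 digits lie in {0, 1, 2}. Then S contains no nontrivial four-term arithmetic progression. -/
/-- The set of positive integers all of whose base-6 digits lie in `{0, 1, 2}`. -/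
def digitSet : Set ℕ := {m : ℕ | 0 < m ∧ ∀ c ∈ Nat.digits 6 m, c ≤ 2}

private def Pd (m : ℕ) : Prop := ∀ c ∈ Nat.digits 6 m, c ≤ 2

private lemma Pd_step {m : ℕ} (h : Pd m) : m % 6 ≤ 2 ∧ Pd (m / 6) := by
  rcases Nat.eq_zero_or_pos m with rfl | hm
  · exact ⟨by norm_num, h⟩
  · rw [Pd, Nat.digits_def' (by norm_num) hm] at h
    exact ⟨h _ List.mem_cons_self, fun c hc => h c (List.mem_cons_of_mem _ hc)⟩

private lemma mod_lemma {x y : ℕ} (hx : x ≤ 2) (hy : y < 6) (h1 : (x + y) % 6 ≤ 2)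
    (h2 : (x + 2 * y) % 6 ≤ 2) (h3 : (x + 3 * y) % 6 ≤ 2) : y = 0 := by
  interval_cases y <;> omega

private lemma key : ∀ d, 0 < d → ∀ a, Pd a → Pd (a + d) → Pd (a + 2 * d) →
    Pd (a + 3 * d) → False := by
  intro d
  induction d using Nat.strong_induction_on with
  | _ d ih =>
  intro hd a h0 h1 h2 h3
  obtain ⟨r0, q0⟩ := Pd_step h0
  obtain ⟨r1, q1⟩ := Pd_step h1
  obtain ⟨r2, q2⟩ := Pd_step h2
  obtain ⟨r3, q3⟩ := Pd_step h3
  have hd6 : d % 6 = 0 :=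
    mod_lemma r0 (Nat.mod_lt _ (by norm_num)) (by omega) (by omega) (by omega)
  have e1 : (a + d) / 6 = a / 6 + d / 6 := by omega
  have e2 : (a + 2 * d) / 6 = a / 6 + 2 * (d / 6) := by omega
  have e3 : (a + 3 * d) / 6 = a / 6 + 3 * (d / 6) := by omega
  rw [e1] at q1; rw [e2] at q2; rw [e3] at q3
  exact ih (d / 6) (by omega) (by omega) (a / 6) q0 q1 q2 q3

theorem stmt_14 :
    ¬ ∃ a d : ℕ, d ≠ 0 ∧ a ∈ digitSet ∧ a + d ∈ digitSet ∧ a + 2 * d ∈ digitSet ∧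
      a + 3 * d ∈ digitSet := by
  rintro ⟨a, d, hd, ⟨-, ha⟩, ⟨-, h1⟩, ⟨-, h2⟩, ⟨-, h3⟩⟩
  exact key d (Nat.pos_of_ne_zero hd) a ha h1 h2 h3
end
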